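/- Let p be an odd prime and ζ = e^{2πi/(p-1)}. Then ∏_{1 ≤ i < j ≤ (p-1)/2} (ζ^{2j} - ζ^{2i}) = e^{(p-3)(3p+1)πi/16} · ((p-1)/2)^{(p-1)/4}. -/

import Mathlib

open Finset Complex Real


lemma aux_prod_pairs {M : Type*} [CommMonoid M] (g : ℕ → M) (n : ℕ) :
    ∏ j ∈ Icc 1 n, ∏ d ∈ Ico 1 j, g d = ∏ d ∈ Ico 1 n, g d ^ (n - d) := by
  induction n with
  | zero => simp
  | succ n ih =>
    rw [Finset.prod_Icc_succ_top (by omega), ih]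
    have h1 : ∀ d ∈ Ico 1 (n+1), g d ^ (n + 1 - d) = g d ^ (n - d) * g d := by
      intro d hd
      rw [mem_Ico] at hd
      rw [Nat.succ_sub (by omega), pow_succ]
    rw [Finset.prod_congr rfl h1, Finset.prod_mul_distrib]
    congr 1
    rcases Nat.eq_zero_or_pos n with h | h
    · subst h; simp
    · rw [Finset.prod_Ico_succ_top h, Nat.sub_self, pow_zero, mul_one]

lemma aux_sum_id (j : ℕ) : 2 * (∑ i ∈ Ico 1 j, i) + j = j * j := by
  induction j with
  | zero => simp
  | succ j ih =>
    rcases Nat.eq_zero_or_pos j with rfl | h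
    · simp
    · rw [Finset.sum_Ico_succ_top (by omega)]
      zify at ih ⊢
      linear_combination ih

lemma aux_inner (j : ℕ) : 2 * (∑ i ∈ Ico 1 j, (i + j)) + 3 * j = 3 * (j * j) := by
  rcases Nat.eq_zero_or_pos j with rfl | h
  · simp
  · rw [Finset.sum_add_distrib, Finset.sum_const, Nat.card_Ico, smul_eq_mul]
    have := aux_sum_id j
    zify [h] at this ⊢
    linear_combination this

lemma aux_S (n : ℕ) : 2 * (∑ j ∈ Icc 1 n, ∑ i ∈ Ico 1 j, (i + j)) + n = n * n * n := by
  induction n with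
  | zero => simp
  | succ n ih =>
    rw [Finset.sum_Icc_succ_top (by omega)]
    have h := aux_inner (n+1)
    zify at ih h ⊢
    linear_combination ih + h

lemma aux_N (n : ℕ) : 2 * (∑ j ∈ Icc 1 n, (j - 1)) + n = n * n := by
  induction n with
  | zero => simp
  | succ n ih =>
    rw [Finset.sum_Icc_succ_top (by omega)]
    zify [Nat.le_add_left 1 n] at ih ⊢
    · linear_combination ih


lemma aux_sub_exp (x y : ℝ) :
    Complex.exp (2*x*I) - Complex.exp (2*y*I)
      = Complex.exp ((x+y)*I) * (2*I) * Complex.sin (x - y) := by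
  have h1 : Complex.exp (((x:ℂ)-y)*I) * Complex.exp (-((x:ℂ)-y)*I) = 1 := by
    rw [← Complex.exp_add]; ring_nf; exact Complex.exp_zero
  have h2 : Complex.exp (((x:ℂ)+y)*I) * Complex.exp (((x:ℂ)-y)*I) = Complex.exp (2*x*I) := by
    rw [← Complex.exp_add]; ring_nf
  have h3 : Complex.exp (((x:ℂ)+y)*I) * Complex.exp (-((x:ℂ)-y)*I) = Complex.exp (2*y*I) := by
    rw [← Complex.exp_add]; ring_nf
  rw [Complex.sin]
  push_cast
  linear_combination -h2 + h3 + (Complex.exp (((x:ℂ)+y)*I) * Complex.exp (((x:ℂ)-y)*I)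
    - Complex.exp (((x:ℂ)+y)*I) * Complex.exp (-((x:ℂ)-y)*I)) * Complex.I_sq

lemma aux_one_sub_exp (θ : ℝ) :
    1 - Complex.exp (2*θ*I) = (-2*I) * Complex.exp (θ*I) * Complex.sin θ := by
  have h1 : Complex.exp ((θ:ℂ)*I) * Complex.exp (-(θ:ℂ)*I) = 1 := by
    rw [← Complex.exp_add]; ring_nf; exact Complex.exp_zero
  have h2 : Complex.exp ((θ:ℂ)*I) * Complex.exp ((θ:ℂ)*I) = Complex.exp (2*θ*I) := by
    rw [← Complex.exp_add]; ring_nf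
  rw [Complex.sin]
  push_cast
  linear_combination -h1 + h2 + (Complex.exp ((θ:ℂ)*I) * Complex.exp (-(θ:ℂ)*I)
    - Complex.exp ((θ:ℂ)*I)^2) * Complex.I_sq

lemma aux_sum_succ (m : ℕ) : 2 * ∑ k ∈ range m, (k+1) = m * (m+1) := by
  induction m with
  | zero => simp
  | succ m ih =>
    rw [Finset.sum_range_succ]
    zify at ih ⊢
    linear_combination ih

lemma aux_exp_I_pow (m : ℕ) : Complex.exp (m * (π/2 : ℝ) * I) = I ^ m := by
  rw [show (m : ℂ) * (π/2 : ℝ) * I = m * (((π/2 : ℝ)) * I) by ring, Complex.exp_nat_mul]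
  congr 1
  rw [Complex.exp_mul_I]
  push_cast
  simp

lemma aux_sin_prod (n : ℕ) (hn : 1 ≤ n) :
    (∏ d ∈ Ico 1 n, Real.sin (d*π/n)) * 2^(n-1) = n := by
  obtain ⟨m, rfl⟩ : ∃ m, n = m + 1 := ⟨n - 1, by omega⟩
  have hprim := Complex.isPrimitiveRoot_exp (m+1) (by omega)
  have h0 := hprim.prod_one_sub_pow_eq_order
  have key : ∀ k ∈ range m, (1 - Complex.exp (2*π*I/(m+1:ℕ)) ^ (k+1))
      = (-2*I) * Complex.exp ((((k:ℝ)+1)*π/((m+1:ℕ):ℝ) : ℝ) * I)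
          * (Real.sin (((k:ℝ)+1)*π/((m+1:ℕ):ℝ)) : ℂ) := by
    intro k _
    rw [← Complex.exp_nat_mul,
      show ((k+1:ℕ):ℂ) * (2*π*I/(m+1:ℕ)) = 2*((((k:ℝ)+1)*π/((m+1:ℕ):ℝ) : ℝ):ℂ)*I by
        push_cast; ring,
      aux_one_sub_exp, Complex.ofReal_sin]
  rw [Finset.prod_congr rfl key, Finset.prod_mul_distrib, Finset.prod_mul_distrib,
    Finset.prod_const, card_range, ← Complex.exp_sum, ← Complex.ofReal_prod] at h0
  have hsum : ∑ k ∈ range m, (((((k:ℝ)+1)*π/((m+1:ℕ):ℝ)) : ℝ):ℂ) * I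
      = ((∑ k ∈ range m, (k+1) : ℕ) : ℂ) * (π * I / ((m+1:ℕ):ℂ)) := by
    rw [Nat.cast_sum, Finset.sum_mul]
    refine Finset.sum_congr rfl fun k _ => ?_
    push_cast
    ring
  rw [hsum] at h0
  have hM := aux_sum_succ m
  have hne : ((m+1:ℕ):ℂ) ≠ 0 := Nat.cast_ne_zero.mpr (by omega)
  have hMc : ((∑ k ∈ range m, (k+1) : ℕ) : ℂ) * (π * I / ((m+1:ℕ):ℂ))
      = (m:ℂ) * ((π/2 : ℝ):ℂ) * I := by
    have h2 : (2 : ℂ) * ((∑ k ∈ range m, (k+1) : ℕ) : ℂ) = (m:ℂ) * ((m:ℂ)+1) := by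
      exact_mod_cast congrArg (Nat.cast : ℕ → ℂ) hM
    push_cast at hne h2 ⊢
    field_simp
    linear_combination h2
  rw [hMc, aux_exp_I_pow] at h0
  have hIpow : (-2*I:ℂ)^m * I^m = 2^m := by
    rw [← mul_pow]
    norm_num [mul_assoc, Complex.I_mul_I]
  have hr : (2:ℝ)^m * (∏ k ∈ range m, Real.sin (((k:ℝ)+1)*π/((m+1:ℕ):ℝ))) = ((m+1:ℕ):ℝ) := by
    apply Complex.ofReal_injective
    rw [Complex.ofReal_mul, Complex.ofReal_pow, Complex.ofReal_natCast, Complex.ofReal_ofNat,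
      show ((m+1:ℕ):ℂ) = (m:ℂ)+1 by push_cast; ring]
    linear_combination h0
      - ((∏ k ∈ range m, Real.sin (((k:ℝ)+1)*π/((m+1:ℕ):ℝ)) : ℝ):ℂ) * hIpow
  rw [Finset.prod_Ico_eq_prod_range]
  simp only [Nat.add_sub_cancel]
  have heq : ∀ k ∈ range m, Real.sin (((1+k:ℕ):ℝ)*π/((m+1:ℕ):ℝ))
      = Real.sin (((k:ℝ)+1)*π/((m+1:ℕ):ℝ)) := by
    intro k _; congr 1; push_cast; ring
  rw [Finset.prod_congr rfl heq, mul_comm]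
  exact hr

lemma aux_P (n : ℕ) (hn : 1 ≤ n) :
    (2:ℝ)^(∑ j ∈ Icc 1 n, (j-1)) * ∏ d ∈ Ico 1 n, Real.sin (d*π/n)^(n-d)
      = Real.sqrt ((n:ℝ)^n) := by
  set N := ∑ j ∈ Icc 1 n, (j-1) with hNdef
  set P := ∏ d ∈ Ico 1 n, Real.sin (d*π/n)^(n-d) with hPdef
  have hnR : (0:ℝ) < n := by exact_mod_cast hn
  have hsnn : ∀ d ∈ Ico 1 n, 0 ≤ Real.sin (d*π/n) := by
    intro d hd
    rw [mem_Ico] at hd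
    apply Real.sin_nonneg_of_nonneg_of_le_pi
    · positivity
    · rw [div_le_iff₀ hnR]
      have : (d:ℝ) ≤ n := by exact_mod_cast hd.2.le
      nlinarith [Real.pi_pos]
  have hPnn : 0 ≤ P := Finset.prod_nonneg fun d hd => pow_nonneg (hsnn d hd) _
  have hrev : P = ∏ d ∈ Ico 1 n, Real.sin (d*π/n)^d := by
    rw [hPdef]
    refine Finset.prod_nbij' (fun d => n - d) (fun d => n - d) ?_ ?_ ?_ ?_ ?_
    · intro d hd; rw [mem_Ico] at *; omega
    · intro d hd; rw [mem_Ico] at *; omega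
    · intro d hd; rw [mem_Ico] at hd; omega
    · intro d hd; rw [mem_Ico] at hd; omega
    · intro d hd
      rw [mem_Ico] at hd
      have h1 : ((n - d : ℕ):ℝ) = (n:ℝ) - d := by
        rw [Nat.cast_sub hd.2.le]
      have h2 : n - (n - d) = d := by omega
      rw [h1, show ((n:ℝ) - d) * π / n = π - d*π/n by field_simp,
        Real.sin_pi_sub]
  have hPP : P * P = ((n:ℝ) / 2^(n-1))^n := by
    nth_rewrite 2 [hrev]
    rw [hPdef, ← Finset.prod_mul_distrib]
    have : ∀ d ∈ Ico 1 n, Real.sin (d*π/n)^(n-d) * Real.sin (d*π/n)^d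
        = Real.sin (d*π/n)^n := by
      intro d hd
      rw [mem_Ico] at hd
      rw [← pow_add]
      congr 1
      omega
    rw [Finset.prod_congr rfl this, Finset.prod_pow]
    congr 1
    rw [eq_div_iff (by positivity)]
    exact aux_sin_prod n hn
  have hsq : ((2:ℝ)^N * P)^2 = (n:ℝ)^n := by
    rw [mul_pow, ← pow_mul, sq, hPP, div_pow, ← pow_mul, Nat.sub_mul, one_mul]
    have hNn : N * 2 = n * n - n := by have := aux_N n; omega
    rw [hNn]
    field_simp
  have hnn : (0:ℝ) ≤ (2:ℝ)^N * P := by positivity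
  rw [← hsq, Real.sqrt_sq hnn]

theorem stmt_8 (p : ℕ) (hp : p.Prime) (hodd : Odd p) :
    ∏ j ∈ Finset.Icc 1 ((p - 1) / 2), ∏ i ∈ Finset.Ico 1 j,
      (Complex.exp (2 * (Real.pi : ℂ) * Complex.I / ((p : ℂ) - 1)) ^ (2 * j)
        - Complex.exp (2 * (Real.pi : ℂ) * Complex.I / ((p : ℂ) - 1)) ^ (2 * i))
      = Complex.exp ((((p : ℂ) - 3) * (3 * (p : ℂ) + 1) / 16) * (Real.pi : ℂ) * Complex.I)
          * (((((p : ℝ) - 1) / 2) ^ (((p : ℝ) - 1) / 4) : ℝ) : ℂ) := by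
  obtain ⟨n, hpn⟩ := hodd
  have hp2 : p ≠ 2 := by rintro rfl; omega
  have hp3 : 3 ≤ p := by have := hp.two_le; omega
  have hn1 : 1 ≤ n := by omega
  subst hpn
  have hnne : (n:ℂ) ≠ 0 := Nat.cast_ne_zero.mpr (by omega)
  have hnR : (0:ℝ) < n := by exact_mod_cast hn1
  have hhalf : (2*n+1 - 1)/2 = n := by omega
  rw [hhalf]
  -- termwise decomposition
  have hterm : ∀ j ∈ Icc 1 n, ∀ i ∈ Ico 1 j,
      Complex.exp (2 * (π:ℂ) * I / (((2*n+1 : ℕ):ℂ) - 1)) ^ (2*j)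
        - Complex.exp (2 * (π:ℂ) * I / (((2*n+1 : ℕ):ℂ) - 1)) ^ (2*i)
      = Complex.exp ((((j:ℝ)*π/n : ℝ) + ((i:ℝ)*π/n : ℝ))*I) * (2*I)
          * Complex.sin (((j:ℝ)*π/n : ℝ) - ((i:ℝ)*π/n : ℝ)) := by
    intro j hj i hi
    have hx : ∀ k : ℕ, Complex.exp (2 * (π:ℂ) * I / (((2*n+1 : ℕ):ℂ) - 1)) ^ (2*k)
        = Complex.exp (2 * (((k:ℝ)*π/n : ℝ):ℂ) * I) := by
      intro k
      rw [← Complex.exp_nat_mul]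
      congr 1
      push_cast
      field_simp
      ring
    rw [hx j, hx i, aux_sub_exp ((j:ℝ)*π/n) ((i:ℝ)*π/n)]
  rw [Finset.prod_congr rfl (fun j hj => Finset.prod_congr rfl (hterm j hj))]
  simp only [Finset.prod_mul_distrib]
  -- sin part
  have hsin : ∀ j ∈ Icc 1 n, (∏ i ∈ Ico 1 j,
      Complex.sin (((j:ℝ)*π/n : ℝ) - ((i:ℝ)*π/n : ℝ)))
      = ((∏ d ∈ Ico 1 j, Real.sin ((d:ℝ)*π/n) : ℝ) : ℂ) := by
    intro j hj
    rw [Complex.ofReal_prod]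
    refine Finset.prod_nbij' (fun i => j - i) (fun d => j - d) ?_ ?_ ?_ ?_ ?_
    · intro i hi; rw [mem_Ico] at *; omega
    · intro i hi; rw [mem_Ico] at *; omega
    · intro i hi; rw [mem_Ico] at hi; omega
    · intro i hi; rw [mem_Ico] at hi; omega
    · intro i hi
      rw [mem_Ico] at hi
      rw [← Complex.ofReal_sub, ← Complex.ofReal_sin]
      congr 2
      rw [Nat.cast_sub (by omega)]
      ring
  rw [Finset.prod_congr rfl hsin, ← Complex.ofReal_prod,
    aux_prod_pairs (fun d => Real.sin ((d:ℝ)*π/n)) n]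
  -- constant part
  simp only [Finset.prod_const, Nat.card_Ico]
  rw [Finset.prod_pow_eq_pow_sum, Finset.prod_pow_eq_pow_sum]
  -- exp part
  simp only [← Complex.exp_sum]
  have hsum : (∑ j ∈ Icc 1 n, ∑ i ∈ Ico 1 j,
      ((((j:ℝ)*π/n : ℝ):ℂ) + (((i:ℝ)*π/n : ℝ):ℂ))*I)
      = ((∑ j ∈ Icc 1 n, ∑ i ∈ Ico 1 j, (i + j) : ℕ) : ℂ) * (π * I / n) := by
    rw [Nat.cast_sum, Finset.sum_mul]
    refine Finset.sum_congr rfl fun j hj => ?_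
    rw [Nat.cast_sum, Finset.sum_mul]
    refine Finset.sum_congr rfl fun i hi => ?_
    push_cast
    field_simp
    ring
  rw [hsum]
  set S := ∑ j ∈ Icc 1 n, ∑ i ∈ Ico 1 j, (i + j) with hSdef
  set N := ∑ j ∈ Icc 1 n, (j - 1) with hNdef
  have hS := aux_S n
  have hN := aux_N n
  rw [← hSdef] at hS
  rw [← hNdef] at hN
  have hPeq := aux_P n hn1
  rw [← hNdef] at hPeq
  rw [← aux_exp_I_pow N]
  rw [show Complex.exp ((S:ℂ)*(π*I/(n:ℂ))) * ((2:ℂ)^N * Complex.exp ((N:ℂ)*((π/2:ℝ):ℂ)*I))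
      = Complex.exp ((S:ℂ)*(π*I/(n:ℂ)) + (N:ℂ)*((π/2:ℝ):ℂ)*I) * (((2:ℝ)^N : ℝ):ℂ) from by
    rw [Complex.exp_add]; push_cast; ring]
  have hphase : (S:ℂ) * (π * I / n) + (N:ℂ) * ((π/2:ℝ):ℂ) * I
      = ((((2*n+1:ℕ):ℂ) - 3) * (3 * ((2*n+1:ℕ):ℂ) + 1) / 16) * (π:ℂ) * I := by
    have hSc : 2 * (S:ℂ) + (n:ℂ) = (n:ℂ) * n * n := by
      exact_mod_cast congrArg (Nat.cast : ℕ → ℂ) hS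
    have hNc : 2 * (N:ℂ) + (n:ℂ) = (n:ℂ) * n := by
      exact_mod_cast congrArg (Nat.cast : ℕ → ℂ) hN
    push_cast
    field_simp
    linear_combination 16 * hSc + (8*(n:ℂ)) * hNc
  rw [hphase]
  rw [mul_assoc, ← Complex.ofReal_mul, hPeq]
  congr 2
  rw [show (((2*n+1:ℕ):ℝ) - 1)/2 = (n:ℝ) by push_cast; ring,
      show (((2*n+1:ℕ):ℝ) - 1)/4 = (n:ℝ)*(1/2) by push_cast; ring,
      Real.rpow_mul (n.cast_nonneg), Real.rpow_natCast, ← Real.sqrt_eq_rpow]
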